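/- With R, U, η and W as above, W is monotone: if Y ≤ Ỹ pointwise (almost surely), then W(Y) ≤ W(Ỹ). Moreover, W(Ỹ) − W(Y) ≥ (η/(1+η))·(R(−Ỹ) − R(−Y)) ≥ 0. -/

import Mathlib

/-- Static version of Proposition 3.1(i): monotonicity of W with a quantitative bound. -/
theorem stmt_2 {Ω : Type*}
    (R U : (Ω → ℝ) → ℝ) (η : ℝ) (hη : 0 < η)
    (hRti : ∀ (Y : Ω → ℝ) (l : ℝ), R (fun ω => Y ω + l) = R Y - l)
    (hRmono : ∀ Y Y' : Ω → ℝ, (∀ ω, Y ω ≤ Y' ω) → R Y' ≤ R Y)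
    (hRph : ∀ (Y : Ω → ℝ) (c : ℝ), 0 ≤ c → R (fun ω => c * Y ω) = c * R Y)
    (hUti : ∀ (Y : Ω → ℝ) (l : ℝ), U (fun ω => Y ω + l) = U Y + l)
    (hUmono : ∀ Y Y' : Ω → ℝ, (∀ ω, Y ω ≤ Y' ω) → U Y ≤ U Y')
    (hUph : ∀ (Y : Ω → ℝ) (c : ℝ), 0 ≤ c → U (fun ω => c * Y ω) = c * U Y)
    (W : (Ω → ℝ) → ℝ)
    (hW : ∀ Y : Ω → ℝ,
      W Y = R (fun ω => -Y ω)
        - (1 / (1 + η)) * U (fun ω => max (R (fun ω' => -Y ω') - Y ω) 0)) :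
    ∀ Y Y' : Ω → ℝ, (∀ ω, Y ω ≤ Y' ω) →
      W Y ≤ W Y' ∧
      (η / (1 + η)) * (R (fun ω => -Y' ω) - R (fun ω => -Y ω)) ≤ W Y' - W Y ∧
      0 ≤ (η / (1 + η)) * (R (fun ω => -Y' ω) - R (fun ω => -Y ω)) := by
  intro Y Y' hYY'
  set a := R (fun ω => -Y ω) with ha_def
  set a' := R (fun ω => -Y' ω) with ha'_def
  have ha : a ≤ a' := hRmono _ _ (fun ω => by simpa using neg_le_neg (hYY' ω))
  have hpos : (0:ℝ) < 1 + η := by linarith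
  have hU : U (fun ω => max (a' - Y' ω) 0) ≤ U (fun ω => max (a - Y ω) 0) + (a' - a) := by
    have := hUti (fun ω => max (a - Y ω) 0) (a' - a)
    calc U (fun ω => max (a' - Y' ω) 0)
        ≤ U (fun ω => max (a - Y ω) 0 + (a' - a)) := by
          apply hUmono
          intro ω
          have h1 : a' - Y' ω ≤ max (a - Y ω) 0 + (a' - a) := by
            have := hYY' ω
            have := le_max_left (a - Y ω) 0
            linarith
          have h2 : (0:ℝ) ≤ max (a - Y ω) 0 + (a' - a) := by
            have := le_max_right (a - Y ω) 0
            linarith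
          exact max_le h1 h2
      _ = U (fun ω => max (a - Y ω) 0) + (a' - a) := this
  have hkey : (η / (1 + η)) * (a' - a) ≤ W Y' - W Y := by
    rw [hW Y, hW Y']
    have hc : (0:ℝ) < 1 / (1 + η) := by positivity
    have hfrac : η / (1 + η) = 1 - 1 / (1 + η) := by field_simp; ring
    rw [hfrac]
    nlinarith [mul_le_mul_of_nonneg_left hU hc.le]
  have hnn : 0 ≤ (η / (1 + η)) * (a' - a) := by
    have : 0 ≤ η / (1 + η) := by positivity
    nlinarith
  exact ⟨by linarith, hkey, hnn⟩
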